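/- For X ∈ g let ad X : g → g denote the linear map Y ↦ [X,Y], and let B(X,Y) = trace((ad X) ∘ (ad Y) : g → g) be the Killing form of g. Then B(M₅,M₅) = −4, while B(M_i,M_j) = 0 for every other pair of basis elements (i,j) ≠ (5,5) with i, j ∈ {1,...,7}. In particular the Killing form of g is degenerate — the nonzero element M₄ satisfies B(M₄,Y) = 0 for all Y ∈ g — and therefore g is not a semisimple Lie algebra. -/

import Mathlib

noncomputable section

set_option maxHeartbeats 4000000

/-- The elementary 5×5 real matrix with a 1 in entry (i,j). -/
def E (i j : Fin 5) : Matrix (Fin 5) (Fin 5) ℝ := Matrix.single i j 1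

/-- The matrices M₁,...,M₇ realizing the symmetry Lie algebra of the (2+1)-dimensional
Kuramoto–Sivashinsky equation on the 5-dimensional space with basis 1, x, y, t, h:
M₁ = E₀₁, M₂ = E₀₂, M₃ = E₀₃, M₄ = E₀₄, M₅ = E₂₁ − E₁₂,
M₆ = E₃₁ + (1/(2λ))E₁₄, M₇ = E₃₂ + (1/(2λ))E₂₄ (indexed here by `Fin 7`). -/
def M (lam : ℝ) : Fin 7 → Matrix (Fin 5) (Fin 5) ℝ :=
  ![E 0 1, E 0 2, E 0 3, E 0 4, E 2 1 - E 1 2,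
    E 3 1 + (1 / (2 * lam)) • E 1 4, E 3 2 + (1 / (2 * lam)) • E 2 4]

/-- g: the real linear span of {M₁,...,M₇}. -/
def ksSpan (lam : ℝ) : Submodule ℝ (Matrix (Fin 5) (Fin 5) ℝ) :=
  Submodule.span ℝ (Set.range (M lam))

attribute [local instance 100] LieRing.ofAssociativeRing

/-- g as a Lie subalgebra of the 5×5 real matrices. -/
def ksLie (lam : ℝ) : LieSubalgebra ℝ (Matrix (Fin 5) (Fin 5) ℝ) :=
  LieSubalgebra.lieSpan ℝ (Matrix (Fin 5) (Fin 5) ℝ) (Set.range (M lam))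

namespace KSAux

/-- The pivot positions of M₁,...,M₇. -/
def P : Fin 7 → Fin 5 × Fin 5 := ![(0,1),(0,2),(0,3),(0,4),(2,1),(3,1),(3,2)]

variable (lam : ℝ)

lemma Mv0 : M lam 0 = E 0 1 := rfl
lemma Mv1 : M lam 1 = E 0 2 := rfl
lemma Mv2 : M lam 2 = E 0 3 := rfl
lemma Mv3 : M lam 3 = E 0 4 := rfl
lemma Mv4 : M lam 4 = E 2 1 - E 1 2 := rfl
lemma Mv5 : M lam 5 = E 3 1 + (1 / (2 * lam)) • E 1 4 := rfl
lemma Mv6 : M lam 6 = E 3 2 + (1 / (2 * lam)) • E 2 4 := rfl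
lemma Pv0 : P 0 = (0,1) := rfl
lemma Pv1 : P 1 = (0,2) := rfl
lemma Pv2 : P 2 = (0,3) := rfl
lemma Pv3 : P 3 = (0,4) := rfl
lemma Pv4 : P 4 = (2,1) := rfl
lemma Pv5 : P 5 = (3,1) := rfl
lemma Pv6 : P 6 = (3,2) := rfl

lemma E_apply (i j a b : Fin 5) : E i j a b = if i = a ∧ j = b then 1 else 0 := rfl

lemma Emul (i j k l : Fin 5) : E i j * E k l = if j = k then E i l else 0 := by
  by_cases h : j = k
  · subst h; simp [E, Matrix.single_mul_single_same]
  · simp [E, h, Matrix.single_mul_single_of_ne]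

lemma M_pivot (i k : Fin 7) : M lam i (P k).1 (P k).2 = if i = k then 1 else 0 := by
  fin_cases i <;> fin_cases k <;>
    simp (config := { decide := true }) [Mv0, Mv1, Mv2, Mv3, Mv4, Mv5, Mv6,
      Pv0, Pv1, Pv2, Pv3, Pv4, Pv5, Pv6, E_apply,
      Matrix.add_apply, Matrix.sub_apply, Matrix.smul_apply]

lemma brak_span (i j : Fin 7) :
    ⁅M lam i, M lam j⁆ = ∑ k : Fin 7, (⁅M lam i, M lam j⁆ (P k).1 (P k).2) • M lam k := by
  have hc : ∀ t : Fin 7, t = 0 ∨ t = 1 ∨ t = 2 ∨ t = 3 ∨ t = 4 ∨ t = 5 ∨ t = 6 := by decide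
  rcases hc i with rfl|rfl|rfl|rfl|rfl|rfl|rfl <;> rcases hc j with rfl|rfl|rfl|rfl|rfl|rfl|rfl <;>
    (simp only [Fin.reduceEq, Fin.sum_univ_seven,
      Mv0, Mv1, Mv2, Mv3, Mv4, Mv5, Mv6, Pv0, Pv1, Pv2, Pv3, Pv4, Pv5, Pv6, Ring.lie_def,
      sub_mul, mul_sub, add_mul, mul_add, smul_mul_assoc, mul_smul_comm, Emul,
      reduceIte, smul_zero, zero_mul, mul_zero, sub_zero, zero_sub, add_zero, zero_add,
      neg_zero, neg_neg, sub_neg_eq_add, neg_mul, mul_neg, neg_add, neg_sub,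
      smul_add, smul_sub, smul_smul, smul_neg,
      Matrix.add_apply, Matrix.sub_apply, Matrix.smul_apply, Matrix.neg_apply,
      Matrix.zero_apply, E_apply, smul_eq_mul, mul_one, one_mul, one_smul, zero_smul,
      and_true, true_and, and_false, false_and, and_self, ite_true, ite_false,
      sub_self] <;> module)

lemma keysum (i j : Fin 7) :
    ∑ k : Fin 7, ⁅M lam i, ⁅M lam j, M lam k⁆⁆ (P k).1 (P k).2
      = if i = 4 ∧ j = 4 then -4 else 0 := by
  have hc : ∀ t : Fin 7, t = 0 ∨ t = 1 ∨ t = 2 ∨ t = 3 ∨ t = 4 ∨ t = 5 ∨ t = 6 := by decide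
  rcases hc i with rfl|rfl|rfl|rfl|rfl|rfl|rfl <;> rcases hc j with rfl|rfl|rfl|rfl|rfl|rfl|rfl <;>
    (simp only [Fin.reduceEq, Fin.sum_univ_seven,
      Mv0, Mv1, Mv2, Mv3, Mv4, Mv5, Mv6, Pv0, Pv1, Pv2, Pv3, Pv4, Pv5, Pv6, Ring.lie_def,
      sub_mul, mul_sub, add_mul, mul_add, smul_mul_assoc, mul_smul_comm, Emul,
      reduceIte, smul_zero, zero_mul, mul_zero, sub_zero, zero_sub, add_zero, zero_add,
      neg_zero, neg_neg, sub_neg_eq_add, neg_mul, mul_neg, neg_add, neg_sub,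
      smul_add, smul_sub, smul_smul, smul_neg,
      Matrix.add_apply, Matrix.sub_apply, Matrix.smul_apply, Matrix.neg_apply,
      Matrix.zero_apply, E_apply, smul_eq_mul, mul_one, one_mul, and_true, true_and,
      and_false, false_and, sub_self] <;> ring)

lemma M_mem (i : Fin 7) : M lam i ∈ ksSpan lam := Submodule.subset_span ⟨i, rfl⟩

lemma span_repr {A : Matrix (Fin 5) (Fin 5) ℝ} (hA : A ∈ ksSpan lam) :
    A = ∑ k : Fin 7, A (P k).1 (P k).2 • M lam k := by
  induction hA using Submodule.span_induction with
  | mem x hx =>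
    obtain ⟨i, rfl⟩ := hx
    simp [M_pivot, ite_smul]
  | zero => simp
  | add x y hx hy ihx ihy =>
    conv_lhs => rw [ihx, ihy]
    rw [← Finset.sum_add_distrib]
    refine Finset.sum_congr rfl fun k _ => ?_
    rw [Matrix.add_apply, add_smul]
  | smul a x hx ih =>
    conv_lhs => rw [ih]
    rw [Finset.smul_sum]
    refine Finset.sum_congr rfl fun k _ => ?_
    rw [Matrix.smul_apply, smul_smul, smul_eq_mul]

lemma lie_mem_span {x y : Matrix (Fin 5) (Fin 5) ℝ}
    (hx : x ∈ ksSpan lam) (hy : y ∈ ksSpan lam) : ⁅x, y⁆ ∈ ksSpan lam := by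
  induction hx using Submodule.span_induction with
  | mem x hx =>
    induction hy using Submodule.span_induction with
    | mem y hy =>
      obtain ⟨i, rfl⟩ := hx; obtain ⟨j, rfl⟩ := hy
      rw [brak_span]
      exact Submodule.sum_mem _ fun k _ => Submodule.smul_mem _ _ (M_mem lam k)
    | zero => rw [lie_zero]; exact Submodule.zero_mem _
    | add a b ha hb iha ihb => rw [lie_add]; exact Submodule.add_mem _ iha ihb
    | smul t a ha ih => rw [lie_smul]; exact Submodule.smul_mem _ _ ih
  | zero => rw [zero_lie]; exact Submodule.zero_mem _
  | add a b ha hb iha ihb => rw [add_lie]; exact Submodule.add_mem _ iha ihb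
  | smul t a ha ih => rw [smul_lie]; exact Submodule.smul_mem _ _ ih

/-- The span as a Lie subalgebra. -/
def Ksub : LieSubalgebra ℝ (Matrix (Fin 5) (Fin 5) ℝ) :=
  { ksSpan lam with lie_mem' := fun hx hy => lie_mem_span lam hx hy }

lemma mem_ksLie {x : Matrix (Fin 5) (Fin 5) ℝ} : x ∈ ksLie lam ↔ x ∈ ksSpan lam := by
  constructor
  · intro h
    have h1 : ksLie lam ≤ Ksub lam :=
      LieSubalgebra.lieSpan_le.mpr (fun z hz => Submodule.subset_span hz)
    exact h1 h
  · intro h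
    exact LieSubalgebra.submodule_span_le_lieSpan h

/-- The canonical basis elements of `ksLie lam`. -/
def Nd (i : Fin 7) : ksLie lam :=
  ⟨M lam i, LieSubalgebra.subset_lieSpan ⟨i, rfl⟩⟩

lemma coe_smulK (t : ℝ) (x : ksLie lam) :
    ((t • x : ksLie lam) : Matrix (Fin 5) (Fin 5) ℝ) = t • (x : Matrix (Fin 5) (Fin 5) ℝ) := rfl

/-- Coordinates with respect to the pivots. -/
def ε : ksLie lam →ₗ[ℝ] (Fin 7 → ℝ) where
  toFun x := fun k => (x : Matrix (Fin 5) (Fin 5) ℝ) (P k).1 (P k).2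
  map_add' x y := by funext k; simp
  map_smul' t x := by funext k; simp [coe_smulK]

/-- Inverse: linear combination of the Nd. -/
def σ : (Fin 7 → ℝ) →ₗ[ℝ] ksLie lam :=
  ∑ i : Fin 7, (LinearMap.proj i : (Fin 7 → ℝ) →ₗ[ℝ] ℝ).smulRight (Nd lam i)

lemma coe_σ (c : Fin 7 → ℝ) :
    ((σ lam c : ksLie lam) : Matrix (Fin 5) (Fin 5) ℝ) = ∑ i : Fin 7, c i • M lam i := by
  simp [σ, LinearMap.sum_apply, Nd, coe_smulK]

lemma εσ : (ε lam) ∘ₗ (σ lam) = LinearMap.id := by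
  refine LinearMap.ext fun c => funext fun k => ?_
  simp only [LinearMap.comp_apply, LinearMap.id_apply, ε, LinearMap.coe_mk, AddHom.coe_mk]
  rw [coe_σ]
  simp [Matrix.sum_apply, M_pivot, mul_ite]

lemma σε : (σ lam) ∘ₗ (ε lam) = LinearMap.id := by
  refine LinearMap.ext fun x => Subtype.ext ?_
  simp only [LinearMap.comp_apply, LinearMap.id_apply]
  rw [coe_σ]
  exact (span_repr lam ((mem_ksLie lam).mp x.2)).symm

/-- The coordinate linear equivalence. -/
def eqv : ksLie lam ≃ₗ[ℝ] (Fin 7 → ℝ) := LinearEquiv.ofLinear (ε lam) (σ lam) (εσ lam) (σε lam)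

/-- Basis of ksLie. -/
def bas : Module.Basis (Fin 7) ℝ (ksLie lam) := Module.Basis.ofEquivFun (eqv lam)

lemma bas_eq (k : Fin 7) : bas lam k = Nd lam k := by
  rw [bas, Module.Basis.coe_ofEquivFun]
  refine (LinearEquiv.symm_apply_eq _).mpr ?_
  funext i
  simp only [eqv, LinearEquiv.ofLinear_apply, ε, LinearMap.coe_mk, AddHom.coe_mk, Nd]
  rw [M_pivot, Pi.single_apply]
  simp [eq_comm]

lemma killing_eq (i j : Fin 7) :
    killingForm ℝ (ksLie lam) (Nd lam i) (Nd lam j)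
      = ∑ k : Fin 7, ⁅M lam i, ⁅M lam j, M lam k⁆⁆ (P k).1 (P k).2 := by
  rw [killingForm_apply_apply, LinearMap.trace_eq_matrix_trace ℝ (bas lam), Matrix.trace]
  refine Finset.sum_congr rfl fun k _ => ?_
  rw [Matrix.diag_apply, LinearMap.toMatrix_apply]
  rw [bas_eq]
  have : ((LieAlgebra.ad ℝ (ksLie lam)) (Nd lam i) ∘ₗ (LieAlgebra.ad ℝ (ksLie lam)) (Nd lam j))
      (Nd lam k) = ⁅Nd lam i, ⁅Nd lam j, Nd lam k⁆⁆ := by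
    simp [LieAlgebra.ad_apply]
  rw [this]
  have hrepr : ∀ x : ksLie lam, (bas lam).repr x k
      = (x : Matrix (Fin 5) (Fin 5) ℝ) (P k).1 (P k).2 := fun x => by
    rw [bas, Module.Basis.ofEquivFun_repr_apply]; rfl
  rw [hrepr]
  simp [LieSubalgebra.coe_bracket, Nd]

lemma Nd3_bracket (A : Matrix (Fin 5) (Fin 5) ℝ) (hA : A ∈ ksSpan lam) :
    ⁅M lam 3, A⁆ = 0 := by
  induction hA using Submodule.span_induction with
  | mem x hx =>
    obtain ⟨j, rfl⟩ := hx
    have hc : ∀ t : Fin 7, t = 0 ∨ t = 1 ∨ t = 2 ∨ t = 3 ∨ t = 4 ∨ t = 5 ∨ t = 6 := by decide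
    rcases hc j with rfl|rfl|rfl|rfl|rfl|rfl|rfl <;>
      simp [Fin.reduceEq, Mv0, Mv1, Mv2, Mv3, Mv4, Mv5, Mv6, Ring.lie_def,
        sub_mul, mul_sub, add_mul, mul_add, smul_mul_assoc, mul_smul_comm, Emul, sub_self]
  | zero => rw [lie_zero]
  | add a b ha hb iha ihb => rw [lie_add, iha, ihb, add_zero]
  | smul t a ha ih => rw [lie_smul, ih, smul_zero]

lemma Nd3_lie (Z : ksLie lam) : ⁅Nd lam 3, Z⁆ = 0 := by
  refine Subtype.ext ?_
  rw [LieSubalgebra.coe_bracket]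
  exact Nd3_bracket lam _ ((mem_ksLie lam).mp Z.2)

lemma ad_Nd3 : LieAlgebra.ad ℝ (ksLie lam) (Nd lam 3) = 0 :=
  LinearMap.ext fun z => by rw [LieAlgebra.ad_apply, Nd3_lie]; rfl

lemma Nd3_ne : Nd lam 3 ≠ 0 := by
  intro h
  have h2 := congrArg (fun z : ksLie lam => ((z : Matrix (Fin 5) (Fin 5) ℝ)) 0 4) h
  simp only [Nd, ZeroMemClass.coe_zero, Matrix.zero_apply] at h2
  rw [Mv3, E_apply] at h2
  norm_num at h2

end KSAux

open KSAux

/-- The Killing form B of g satisfies B(M₅,M₅) = −4 and B(M_i,M_j) = 0 for all other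
pairs of basis elements; in particular B is degenerate (the nonzero element M₄ is in its
radical) and g is not semisimple. -/
theorem ksLie_killing_form_degenerate (lam : ℝ) (hlam : lam ≠ 0)
    (N : Fin 7 → ksLie lam)
    (hN : ∀ i : Fin 7, (N i : Matrix (Fin 5) (Fin 5) ℝ) = M lam i) :
    killingForm ℝ (ksLie lam) (N 4) (N 4) = -4 ∧
    (∀ i j : Fin 7, ¬(i = 4 ∧ j = 4) → killingForm ℝ (ksLie lam) (N i) (N j) = 0) ∧
    N 3 ≠ 0 ∧
    (∀ Y : ksLie lam, killingForm ℝ (ksLie lam) (N 3) Y = 0) ∧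
    ¬ LieAlgebra.IsSemisimple ℝ (ksLie lam) := by
  have hNd : ∀ i, N i = Nd lam i := fun i => Subtype.ext (by rw [hN i]; rfl)
  refine ⟨?_, ?_, ?_, ?_, ?_⟩
  · rw [hNd, killing_eq, keysum]; simp
  · intro i j hij
    rw [hNd i, hNd j, killing_eq, keysum, if_neg hij]
  · rw [hNd]; exact Nd3_ne lam
  · intro Y
    rw [hNd, killingForm_apply_apply, ad_Nd3, LinearMap.zero_comp, map_zero]
  · intro hss
    have hc : Nd lam 3 ∈ LieAlgebra.center ℝ (ksLie lam) :=
      (LieModule.mem_maxTrivSubmodule ℝ _ _ _).mpr fun x => by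
        rw [← lie_skew, Nd3_lie, neg_zero]
    rw [LieAlgebra.center_eq_bot ℝ (ksLie lam)] at hc
    exact Nd3_ne lam (by simpa using hc)
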